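/- Let Γ be a subgroup of (ℝ,+) and set Γ⁺ = Γ ∩ [0,∞). Let D_{Γ⁺⊆Γ} be the closed *-subalgebra of the C*-algebra of bounded complex-valued functions on Γ (with supremum norm and pointwise operations) generated by the indicator functions 1_{a+Γ⁺} of the sets a + Γ⁺ = {a + x : x ∈ Γ⁺}, for a ∈ Γ. Let C^λ(ℝ) be the closed *-subalgebra of the C*-algebra of bounded complex-valued functions on ℝ generated by the indicator functions 1_{[a,∞)} for a ∈ Γ. Then there exists a unique *-algebra isomorphism Φ : D_{Γ⁺⊆Γ} → C^λ(ℝ) with Φ(1_{a+Γ⁺}) = 1_{[a,∞)} for all a ∈ Γ, and Φ is Γ-equivariant: for every γ ∈ Γ and f ∈ D_{Γ⁺⊆Γ}, Φ(γ·f) = γ·Φ(f), where in both algebras (γ·f)(x) = f(−γ + x). -/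

import Mathlib

open scoped Classical BoundedContinuousFunction

noncomputable section

/-- A type synonym equipping a type with the discrete topology, so that `Disc α →ᵇ ℂ`
is the C*-algebra of all bounded complex-valued functions on `α` with the supremum
norm, pointwise operations and complex conjugation as involution. -/
def Disc (α : Type*) : Type _ := α

instance (α : Type*) : TopologicalSpace (Disc α) := ⊥
instance (α : Type*) : DiscreteTopology (Disc α) := ⟨rfl⟩

variable (Γ : AddSubgroup ℝ)

/-- The indicator function `1_{a+Γ⁺}` of `a + Γ⁺ = {a + y : y ∈ Γ, 0 ≤ y}`, as a
bounded function on `Γ`. -/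
def indGamma (a : ℝ) : Disc Γ →ᵇ ℂ :=
  BoundedContinuousFunction.ofNormedAddCommGroup
    (fun x : Γ => if ∃ y : ℝ, y ∈ Γ ∧ 0 ≤ y ∧ (x : ℝ) = a + y then (1 : ℂ) else 0)
    continuous_of_discreteTopology 1
    (by intro x; split <;> simp)

/-- The indicator function `1_{[a,∞)}`, as a bounded function on `ℝ`. -/
def indIci (a : ℝ) : Disc ℝ →ᵇ ℂ :=
  BoundedContinuousFunction.ofNormedAddCommGroup
    (fun x : ℝ => if a ≤ x then (1 : ℂ) else 0)
    continuous_of_discreteTopology 1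
    (by intro x; split <;> simp)

/-- The translation action of `γ ∈ Γ` on bounded functions on `Γ`:
`(γ · f)(x) = f(−γ + x)`. -/
def transGamma (γ : Γ) (f : Disc Γ →ᵇ ℂ) : Disc Γ →ᵇ ℂ :=
  f.compContinuous ⟨fun x : Γ => -γ + x, continuous_of_discreteTopology⟩

/-- The translation action of `γ ∈ ℝ` on bounded functions on `ℝ`:
`(γ · f)(x) = f(−γ + x)`. -/
def transReal (γ : ℝ) (f : Disc ℝ →ᵇ ℂ) : Disc ℝ →ᵇ ℂ :=
  f.compContinuous ⟨fun x : ℝ => -γ + x, continuous_of_discreteTopology⟩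

/-- `D_{Γ⁺ ⊆ Γ}`: the closed *-subalgebra of the algebra of bounded functions on `Γ`
generated by the indicator functions `1_{a+Γ⁺}`, `a ∈ Γ`. -/
def DGamma : NonUnitalStarSubalgebra ℂ (Disc Γ →ᵇ ℂ) :=
  (NonUnitalStarAlgebra.adjoin ℂ
    (Set.range fun a : Γ => indGamma Γ (a : ℝ))).topologicalClosure

/-- `C^λ(ℝ)`: the closed *-subalgebra of the algebra of bounded functions on `ℝ`
generated by the indicator functions `1_{[a,∞)}`, `a ∈ Γ`. -/
def CIci : NonUnitalStarSubalgebra ℂ (Disc ℝ →ᵇ ℂ) :=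
  (NonUnitalStarAlgebra.adjoin ℂ
    (Set.range fun a : Γ => indIci (a : ℝ))).topologicalClosure

-- NEW STUFF

/-- Composition with a map, as a star algebra hom on bounded functions on discrete spaces. -/
def compHom {α β : Type*} (τ : C(Disc α, Disc β)) :
    (Disc β →ᵇ ℂ) →⋆ₙₐ[ℂ] (Disc α →ᵇ ℂ) where
  toFun f := f.compContinuous τ
  map_smul' _ _ := rfl
  map_zero' := rfl
  map_add' _ _ := rfl
  map_mul' _ _ := rfl
  map_star' _ := rfl

lemma compHom_apply {α β : Type*} (τ : C(Disc α, Disc β)) (f : Disc β →ᵇ ℂ) (x : Disc α) :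
    compHom τ f x = f (τ x) := rfl

lemma compHom_norm_le {α β : Type*} (τ : C(Disc α, Disc β)) (f : Disc β →ᵇ ℂ) :
    ‖compHom τ f‖ ≤ ‖f‖ :=
  BoundedContinuousFunction.norm_le (norm_nonneg f) |>.2 fun x =>
    f.norm_coe_le_norm (τ x)

lemma compHom_continuous {α β : Type*} (τ : C(Disc α, Disc β)) :
    Continuous (compHom τ) :=
  AddMonoidHomClass.continuous_of_bound (compHom τ) 1 fun f => by
    simpa using compHom_norm_le τ f

/-- Restriction from ℝ to Γ. -/
def resHom : (Disc ℝ →ᵇ ℂ) →⋆ₙₐ[ℂ] (Disc Γ →ᵇ ℂ) :=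
  compHom ⟨fun x : Γ => (x : ℝ), continuous_of_discreteTopology⟩

lemma resHom_indIci (a : Γ) : resHom Γ (indIci (a : ℝ)) = indGamma Γ (a : ℝ) := by
  refine BoundedContinuousFunction.ext fun x' => ?_
  have hx : ∀ x : Γ,
      (if (a : ℝ) ≤ (x : ℝ) then (1:ℂ) else 0)
        = (if ∃ y : ℝ, y ∈ Γ ∧ 0 ≤ y ∧ (x : ℝ) = (a : ℝ) + y then (1:ℂ) else 0) := by
    intro x
    refine if_congr ?_ rfl rfl
    constructor
    · intro h
      exact ⟨(x : ℝ) - (a : ℝ), sub_mem x.2 a.2, by linarith, by ring⟩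
    · rintro ⟨y, -, hy, h⟩
      rw [h]; linarith
  exact hx x' 

/-- The structural invariant: `f` is a "Γ-adapted step function". -/
def Pred (f : Disc ℝ →ᵇ ℂ) : Prop :=
  ∀ x : ℝ, (∀ y : ℝ, y ≤ x → f y = 0) ∨
    ∃ g : ℝ, g ∈ Γ ∧ g ≤ x ∧ ∀ y : ℝ, g ≤ y → y ≤ x → f y = f x

variable {Γ}

lemma pred_binop {f g F : Disc ℝ →ᵇ ℂ} (op : ℂ → ℂ → ℂ) (h0 : op 0 0 = 0)
    (hf : Pred Γ f) (hg : Pred Γ g) (hF : ∀ x : ℝ, F x = op (f x) (g x)) :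
    Pred Γ F := by
  intro x
  rcases hf x with hf' | ⟨g₁, hg₁, hg₁x, hc₁⟩
  · rcases hg x with hg' | ⟨g₂, hg₂, hg₂x, hc₂⟩
    · exact Or.inl fun y hy => by rw [hF, hf' y hy, hg' y hy, h0]
    · refine Or.inr ⟨g₂, hg₂, hg₂x, fun y h1 h2 => ?_⟩
      rw [hF, hF, hf' y h2, hf' x le_rfl, hc₂ y h1 h2]
  · rcases hg x with hg' | ⟨g₂, hg₂, hg₂x, hc₂⟩
    · refine Or.inr ⟨g₁, hg₁, hg₁x, fun y h1 h2 => ?_⟩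
      rw [hF, hF, hg' y h2, hg' x le_rfl, hc₁ y h1 h2]
    · refine Or.inr ⟨max g₁ g₂, ?_, max_le hg₁x hg₂x, fun y h1 h2 => ?_⟩
      · rcases max_cases g₁ g₂ with ⟨h, -⟩ | ⟨h, -⟩ <;> rw [h] <;> assumption
      · rw [hF, hF, hc₁ y (le_trans (le_max_left _ _) h1) h2,
          hc₂ y (le_trans (le_max_right _ _) h1) h2]

lemma pred_unop {f F : Disc ℝ →ᵇ ℂ} (op : ℂ → ℂ) (h0 : op 0 = 0)
    (hf : Pred Γ f) (hF : ∀ x : ℝ, F x = op (f x)) :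
    Pred Γ F := by
  intro x
  rcases hf x with hf' | ⟨g₁, hg₁, hg₁x, hc₁⟩
  · exact Or.inl fun y hy => by rw [hF, hf' y hy, h0]
  · exact Or.inr ⟨g₁, hg₁, hg₁x, fun y h1 h2 => by rw [hF, hF, hc₁ y h1 h2]⟩

lemma pred_of_mem_adjoin {f : Disc ℝ →ᵇ ℂ}
    (hf : f ∈ NonUnitalStarAlgebra.adjoin ℂ (Set.range fun a : Γ => indIci (a : ℝ))) :
    Pred Γ f := by
  induction hf using NonUnitalStarAlgebra.adjoin_induction with
  | mem u hu =>
    obtain ⟨a, rfl⟩ := hu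
    intro x
    by_cases h : (a : ℝ) ≤ x
    · refine Or.inr ⟨(a : ℝ), a.2, h, fun y h1 h2 => ?_⟩
      show (if (a:ℝ) ≤ y then (1:ℂ) else 0) = (if (a:ℝ) ≤ x then (1:ℂ) else 0)
      rw [if_pos h1, if_pos h]
    · refine Or.inl fun y hy => ?_
      show (if (a:ℝ) ≤ y then (1:ℂ) else 0) = 0
      rw [if_neg (by intro h'; exact h (le_trans h' hy))]
  | add u v hu hv pu pv => exact pred_binop (· + ·) (by simp) pu pv fun x => rfl
  | zero => exact fun x => Or.inl fun y _ => rfl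
  | mul u v hu hv pu pv => exact pred_binop (· * ·) (by simp) pu pv fun x => rfl
  | smul c u hu pu => exact pred_unop (c * ·) (by simp) pu fun x => rfl
  | star u hu pu => exact pred_unop (starRingEnd ℂ) (by simp) pu fun x => rfl

lemma norm_resHom_of_mem_adjoin {f : Disc ℝ →ᵇ ℂ}
    (hf : f ∈ NonUnitalStarAlgebra.adjoin ℂ (Set.range fun a : Γ => indIci (a : ℝ))) :
    ‖resHom Γ f‖ = ‖f‖ := by
  refine le_antisymm (compHom_norm_le _ f) ?_
  refine (BoundedContinuousFunction.norm_le (norm_nonneg _)).2 fun x => ?_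
  rcases pred_of_mem_adjoin hf x with h | ⟨g, hgΓ, hgx, hc⟩
  · rw [h x le_rfl]; simp [norm_nonneg]
  · have : f x = resHom Γ f (⟨g, hgΓ⟩ : Γ) := (hc g le_rfl hgx).symm
    rw [this]
    exact (resHom Γ f).norm_coe_le_norm _

variable (Γ)

lemma norm_resHom_of_mem_CIci {f : Disc ℝ →ᵇ ℂ} (hf : f ∈ CIci Γ) :
    ‖resHom Γ f‖ = ‖f‖ := by
  have hcl : IsClosed {f : Disc ℝ →ᵇ ℂ | ‖resHom Γ f‖ = ‖f‖} :=
    isClosed_eq (continuous_norm.comp (compHom_continuous _)) continuous_norm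
  exact hcl.closure_subset_iff.2 (fun g hg => norm_resHom_of_mem_adjoin hg) hf

lemma resHom_mem_DGamma {f : Disc ℝ →ᵇ ℂ} (hf : f ∈ CIci Γ) :
    resHom Γ f ∈ DGamma Γ := by
  refine map_mem_closure (compHom_continuous _) hf fun g hg => ?_
  have : (NonUnitalStarAlgebra.adjoin ℂ (Set.range fun a : Γ => indIci (a : ℝ)))
      ≤ (NonUnitalStarAlgebra.adjoin ℂ
        (Set.range fun a : Γ => indGamma Γ (a : ℝ))).comap (resHom Γ) := by
    refine NonUnitalStarAlgebra.adjoin_le ?_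
    rintro - ⟨a, rfl⟩
    have h1 : resHom Γ (indIci (a : ℝ)) ∈ NonUnitalStarAlgebra.adjoin ℂ
        (Set.range fun a : Γ => indGamma Γ (a : ℝ)) := by
      rw [resHom_indIci]
      exact NonUnitalStarAlgebra.subset_adjoin ℂ _ ⟨a, rfl⟩
    exact h1
  exact this hg

/-- The restriction, as a map `CIci Γ → DGamma Γ`. -/
def resHom' : (CIci Γ) →⋆ₙₐ[ℂ] (DGamma Γ) :=
  NonUnitalStarAlgHom.codRestrict
    ((resHom Γ).comp (NonUnitalStarSubalgebraClass.subtype (CIci Γ)))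
    (DGamma Γ) fun x => resHom_mem_DGamma Γ x.2

lemma resHom'_coe (f : CIci Γ) : (resHom' Γ f : Disc Γ →ᵇ ℂ) = resHom Γ (f : Disc ℝ →ᵇ ℂ) := rfl

lemma resHom'_injective : Function.Injective (resHom' Γ) := by
  intro f g h
  have h2 : resHom Γ ((f : Disc ℝ →ᵇ ℂ) - g) = 0 := by
    rw [map_sub]
    have := congrArg (Subtype.val) h
    rw [resHom'_coe, resHom'_coe] at this
    rw [this, sub_self]
  have h3 : ‖(f : Disc ℝ →ᵇ ℂ) - g‖ = 0 := by
    rw [← norm_resHom_of_mem_CIci Γ (sub_mem f.2 g.2), h2, norm_zero]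
  exact Subtype.ext (by rwa [norm_sub_eq_zero_iff] at h3)

lemma resHom'_isometry : Isometry (resHom' Γ) := by
  refine AddMonoidHomClass.isometry_of_norm _ fun f => ?_
  show ‖(resHom' Γ f : Disc Γ →ᵇ ℂ)‖ = ‖(f : Disc ℝ →ᵇ ℂ)‖
  rw [resHom'_coe]
  exact norm_resHom_of_mem_CIci Γ f.2

instance : IsClosed ((CIci Γ) : Set (Disc ℝ →ᵇ ℂ)) :=
  NonUnitalStarSubalgebra.isClosed_topologicalClosure _

instance : IsClosed ((DGamma Γ) : Set (Disc Γ →ᵇ ℂ)) :=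
  NonUnitalStarSubalgebra.isClosed_topologicalClosure _

set_option synthInstance.maxHeartbeats 1000000 in
lemma resHom'_surjective : Function.Surjective (resHom' Γ) := by
  have hcompl : IsComplete (Set.range fun f : CIci Γ => (resHom' Γ f : Disc Γ →ᵇ ℂ)) := by
    have h1 : Isometry (fun f : CIci Γ => (resHom' Γ f : Disc Γ →ᵇ ℂ)) :=
      (isometry_subtype_coe).comp (resHom'_isometry Γ)
    have h2 : CompleteSpace (CIci Γ) :=
      by haveI : IsClosed ((CIci Γ) : Set (Disc ℝ →ᵇ ℂ)) :=
           NonUnitalStarSubalgebra.isClosed_topologicalClosure _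
         exact IsClosed.completeSpace_coe
    exact h1.isUniformInducing.isComplete_range
  have himg : (DGamma Γ : Set (Disc Γ →ᵇ ℂ))
      ⊆ Set.range fun f : CIci Γ => (resHom' Γ f : Disc Γ →ᵇ ℂ) := by
    refine (hcompl.isClosed.closure_subset_iff).2 ?_
    intro g hg
    suffices h : ∃ f : CIci Γ, (resHom' Γ f : Disc ↥Γ →ᵇ ℂ) = g from h
    induction hg using NonUnitalStarAlgebra.adjoin_induction with
    | mem u hu =>
      obtain ⟨a, rfl⟩ := hu
      exact ⟨⟨indIci (a : ℝ), subset_closure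
        (NonUnitalStarAlgebra.subset_adjoin ℂ _ ⟨a, rfl⟩)⟩, by rw [resHom'_coe, resHom_indIci]⟩
    | add u v hu hv pu pv =>
      obtain ⟨x, hx⟩ := pu; obtain ⟨y, hy⟩ := pv
      exact ⟨x + y, by rw [map_add, ← hx, ← hy]; rfl⟩
    | zero => exact ⟨0, by rw [map_zero]; rfl⟩
    | mul u v hu hv pu pv =>
      obtain ⟨x, hx⟩ := pu; obtain ⟨y, hy⟩ := pv
      exact ⟨x * y, by rw [map_mul, ← hx, ← hy]; rfl⟩
    | smul c u hu pu =>
      obtain ⟨x, hx⟩ := pu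
      exact ⟨c • x, by rw [map_smul, ← hx]; rfl⟩
    | star u hu pu =>
      obtain ⟨x, hx⟩ := pu
      exact ⟨star x, by rw [map_star, ← hx]; rfl⟩
  intro g
  obtain ⟨f, hf⟩ := himg g.2
  exact ⟨f, Subtype.ext hf⟩

/-- The restriction as a star algebra equivalence. -/
def resEquiv : (CIci Γ) ≃⋆ₐ[ℂ] (DGamma Γ) :=
  StarAlgEquiv.ofBijective (resHom' Γ) ⟨resHom'_injective Γ, resHom'_surjective Γ⟩

lemma resEquiv_coe (f : CIci Γ) :
    (resEquiv Γ f : Disc Γ →ᵇ ℂ) = resHom Γ (f : Disc ℝ →ᵇ ℂ) := rfl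

lemma transReal_eq (γ : ℝ) (f : Disc ℝ →ᵇ ℂ) :
    transReal γ f = compHom ⟨fun x : ℝ => -γ + x, continuous_of_discreteTopology⟩ f := rfl

lemma transReal_indIci (γ a : ℝ) : transReal γ (indIci a) = indIci (γ + a) := by
  refine BoundedContinuousFunction.ext fun x' => ?_
  have hx : ∀ x : ℝ, (if a ≤ -γ + x then (1:ℂ) else 0) = (if γ + a ≤ x then (1:ℂ) else 0) := by
    intro x
    refine if_congr ⟨fun h => by linarith, fun h => by linarith⟩ rfl rfl
  exact hx x'

lemma transReal_mem_CIci {g : Disc ℝ →ᵇ ℂ} (γ : Γ) (hg : g ∈ CIci Γ) :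
    transReal (γ : ℝ) g ∈ CIci Γ := by
  rw [show transReal (γ : ℝ) g
    = compHom ⟨fun x : ℝ => -(γ:ℝ) + x, continuous_of_discreteTopology⟩ g from rfl]
  refine map_mem_closure (compHom_continuous _) hg fun u hu => ?_
  have hle : (NonUnitalStarAlgebra.adjoin ℂ (Set.range fun a : Γ => indIci (a : ℝ)))
      ≤ (NonUnitalStarAlgebra.adjoin ℂ
        (Set.range fun a : Γ => indIci (a : ℝ))).comap
          (compHom ⟨fun x : ℝ => -(γ:ℝ) + x, continuous_of_discreteTopology⟩) := by
    refine NonUnitalStarAlgebra.adjoin_le ?_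
    rintro - ⟨a, rfl⟩
    have h1 : compHom (⟨fun x : ℝ => -(γ:ℝ) + x, continuous_of_discreteTopology⟩ :
          C(Disc ℝ, Disc ℝ)) (indIci (a : ℝ))
        ∈ NonUnitalStarAlgebra.adjoin ℂ (Set.range fun a : Γ => indIci (a : ℝ)) := by
      rw [← transReal_eq, transReal_indIci]
      exact NonUnitalStarAlgebra.subset_adjoin ℂ _ ⟨γ + a, by push_cast; ring_nf⟩
    exact h1
  exact hle hu

lemma resHom_transReal (γ : Γ) (g : Disc ℝ →ᵇ ℂ) :
    resHom Γ (transReal (γ : ℝ) g) = transGamma Γ γ (resHom Γ g) := rfl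

lemma indIci_mem_CIci (a : Γ) : indIci (a : ℝ) ∈ CIci Γ :=
  subset_closure (NonUnitalStarAlgebra.subset_adjoin ℂ _ ⟨a, rfl⟩)

lemma indGamma_mem_DGamma (a : Γ) : indGamma Γ (a : ℝ) ∈ DGamma Γ :=
  subset_closure (NonUnitalStarAlgebra.subset_adjoin ℂ _ ⟨a, rfl⟩)

lemma resEquiv_indIci (a : Γ) (h : indIci (a : ℝ) ∈ CIci Γ) :
    resEquiv Γ ⟨indIci (a : ℝ), h⟩ = ⟨indGamma Γ (a : ℝ), indGamma_mem_DGamma Γ a⟩ :=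
  Subtype.ext (by rw [resEquiv_coe]; exact resHom_indIci Γ a)


set_option maxHeartbeats 2000000 in
set_option synthInstance.maxHeartbeats 1000000 in
/-- Let `Γ` be a subgroup of `(ℝ,+)` and `Γ⁺ = Γ ∩ [0,∞)`.  There
exists a unique *-algebra isomorphism `Φ : D_{Γ⁺⊆Γ} → C^λ(ℝ)` with
`Φ(1_{a+Γ⁺}) = 1_{[a,∞)}` for all `a ∈ Γ`, and `Φ` is `Γ`-equivariant for the
translation actions `(γ·f)(x) = f(−γ+x)` on both sides. -/
theorem DGamma_iso_CIci (Γ : AddSubgroup ℝ) :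
    ∃ Φ : DGamma Γ ≃⋆ₐ[ℂ] CIci Γ,
      (∀ a : Γ, ∀ h : indGamma Γ (a : ℝ) ∈ DGamma Γ,
        ((Φ ⟨indGamma Γ (a : ℝ), h⟩ : Disc ℝ →ᵇ ℂ) = indIci (a : ℝ))) ∧
      (∀ γ : Γ, ∀ f : Disc ↥Γ →ᵇ ℂ, ∀ hf : f ∈ DGamma Γ,
        ∀ hγf : transGamma Γ γ f ∈ DGamma Γ,
          ((Φ ⟨transGamma Γ γ f, hγf⟩ : Disc ℝ →ᵇ ℂ) =
            transReal (γ : ℝ) (Φ ⟨f, hf⟩ : Disc ℝ →ᵇ ℂ))) ∧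
      ∀ Ψ : DGamma Γ ≃⋆ₐ[ℂ] CIci Γ,
        (∀ a : Γ, ∀ h : indGamma Γ (a : ℝ) ∈ DGamma Γ,
          ((Ψ ⟨indGamma Γ (a : ℝ), h⟩ : Disc ℝ →ᵇ ℂ) = indIci (a : ℝ))) → Ψ = Φ := by
  refine ⟨(resEquiv Γ).symm, ?_, ?_, ?_⟩
  · intro a h
    have h3 := congrArg (resEquiv Γ).symm (resEquiv_indIci Γ a (indIci_mem_CIci Γ a))
    rw [StarAlgEquiv.symm_apply_apply] at h3
    have : (⟨indGamma Γ (a : ℝ), h⟩ : DGamma Γ) = ⟨indGamma Γ (a : ℝ), indGamma_mem_DGamma Γ a⟩ :=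
      rfl
    rw [this, ← h3]
  · intro γ f hf hγf
    set u := (resEquiv Γ).symm ⟨f, hf⟩ with hu_def
    have hu : resHom Γ (u : Disc ℝ →ᵇ ℂ) = f := by
      have h1 := (resEquiv Γ).apply_symm_apply ⟨f, hf⟩
      have h2 := congrArg Subtype.val h1
      rwa [resEquiv_coe] at h2
    have humem : transReal (γ : ℝ) (u : Disc ℝ →ᵇ ℂ) ∈ CIci Γ :=
      transReal_mem_CIci Γ γ u.2
    have h2 : resEquiv Γ ⟨transReal (γ : ℝ) (u : Disc ℝ →ᵇ ℂ), humem⟩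
        = ⟨transGamma Γ γ f, hγf⟩ := by
      refine Subtype.ext ?_
      rw [resEquiv_coe, resHom_transReal, hu]
    have h3 := congrArg (resEquiv Γ).symm h2
    rw [StarAlgEquiv.symm_apply_apply] at h3
    rw [← h3]
  · intro Ψ hΨ
    -- It suffices to show `Ψ.symm = resEquiv Γ` pointwise.
    have key : ∀ x : CIci Γ, (Ψ.symm x : Disc Γ →ᵇ ℂ) = (resEquiv Γ x : Disc Γ →ᵇ ℂ) := by
      have hcont1 : Continuous fun x : CIci Γ => (Ψ.symm x : Disc Γ →ᵇ ℂ) :=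
        continuous_subtype_val.comp
          (NonUnitalStarAlgHom.isometry Ψ.symm Ψ.symm.injective).continuous
      have hcont2 : Continuous fun x : CIci Γ => (resEquiv Γ x : Disc Γ →ᵇ ℂ) := by
        have : (fun x : CIci Γ => (resEquiv Γ x : Disc Γ →ᵇ ℂ))
            = fun x : CIci Γ => resHom Γ (x : Disc ℝ →ᵇ ℂ) := by
          funext x; exact resEquiv_coe Γ x
        rw [this]
        exact (compHom_continuous _).comp continuous_subtype_val
      have hdense : Dense {x : CIci Γ |
          (x : Disc ℝ →ᵇ ℂ) ∈ NonUnitalStarAlgebra.adjoin ℂ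
            (Set.range fun a : Γ => indIci (a : ℝ))} := by
        intro x
        rw [closure_subtype]
        refine closure_mono ?_ x.2
        intro g hg
        exact ⟨⟨g, subset_closure hg⟩, hg, rfl⟩
      have heq : Set.EqOn (fun x : CIci Γ => (Ψ.symm x : Disc Γ →ᵇ ℂ))
          (fun x : CIci Γ => (resEquiv Γ x : Disc Γ →ᵇ ℂ))
          {x : CIci Γ | (x : Disc ℝ →ᵇ ℂ) ∈ NonUnitalStarAlgebra.adjoin ℂ
            (Set.range fun a : Γ => indIci (a : ℝ))} := by
        rintro ⟨g, hgC⟩ hg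
        simp only [Set.mem_setOf_eq] at hg
        revert hgC
        induction hg using NonUnitalStarAlgebra.adjoin_induction with
        | mem u hu =>
          obtain ⟨a, rfl⟩ := hu
          intro hgC
          have h1 : Ψ ⟨indGamma Γ (a : ℝ), indGamma_mem_DGamma Γ a⟩
              = ⟨indIci (a : ℝ), hgC⟩ :=
            Subtype.ext (hΨ a (indGamma_mem_DGamma Γ a))
          have h2 := congrArg Ψ.symm h1
          rw [StarAlgEquiv.symm_apply_apply] at h2
          show (Ψ.symm ⟨indIci (a : ℝ), hgC⟩ : Disc Γ →ᵇ ℂ)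
            = (resEquiv Γ ⟨indIci (a : ℝ), hgC⟩ : Disc Γ →ᵇ ℂ)
          rw [← h2, resEquiv_indIci Γ a hgC]
        | add u v hu hv pu pv =>
          intro hgC
          have e1 : (⟨u + v, hgC⟩ : CIci Γ)
              = ⟨u, subset_closure hu⟩ + ⟨v, subset_closure hv⟩ := rfl
          show (Ψ.symm ⟨u + v, hgC⟩ : Disc Γ →ᵇ ℂ) = (resEquiv Γ ⟨u + v, hgC⟩ : Disc Γ →ᵇ ℂ)
          rw [e1, map_add, map_add]
          have p1 := pu (subset_closure hu)
          have p2 := pv (subset_closure hv)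
          simp only at p1 p2
          show (Ψ.symm ⟨u, _⟩ : Disc Γ →ᵇ ℂ) + (Ψ.symm ⟨v, _⟩ : Disc Γ →ᵇ ℂ)
            = (resEquiv Γ ⟨u, _⟩ : Disc Γ →ᵇ ℂ) + (resEquiv Γ ⟨v, _⟩ : Disc Γ →ᵇ ℂ)
          rw [p1, p2]
        | zero =>
          intro hgC
          show (Ψ.symm ⟨0, hgC⟩ : Disc Γ →ᵇ ℂ) = (resEquiv Γ ⟨0, hgC⟩ : Disc Γ →ᵇ ℂ)
          have e1 : (⟨(0 : Disc ℝ →ᵇ ℂ), hgC⟩ : CIci Γ) = 0 := rfl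
          rw [e1, map_zero, map_zero]
        | mul u v hu hv pu pv =>
          intro hgC
          have e1 : (⟨u * v, hgC⟩ : CIci Γ)
              = ⟨u, subset_closure hu⟩ * ⟨v, subset_closure hv⟩ := rfl
          show (Ψ.symm ⟨u * v, hgC⟩ : Disc Γ →ᵇ ℂ) = (resEquiv Γ ⟨u * v, hgC⟩ : Disc Γ →ᵇ ℂ)
          rw [e1, map_mul, map_mul]
          have p1 := pu (subset_closure hu)
          have p2 := pv (subset_closure hv)
          simp only at p1 p2
          show (Ψ.symm ⟨u, _⟩ : Disc Γ →ᵇ ℂ) * (Ψ.symm ⟨v, _⟩ : Disc Γ →ᵇ ℂ)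
            = (resEquiv Γ ⟨u, _⟩ : Disc Γ →ᵇ ℂ) * (resEquiv Γ ⟨v, _⟩ : Disc Γ →ᵇ ℂ)
          rw [p1, p2]
        | smul c u hu pu =>
          intro hgC
          have e1 : (⟨c • u, hgC⟩ : CIci Γ) = c • ⟨u, subset_closure hu⟩ := rfl
          show (Ψ.symm ⟨c • u, hgC⟩ : Disc Γ →ᵇ ℂ) = (resEquiv Γ ⟨c • u, hgC⟩ : Disc Γ →ᵇ ℂ)
          rw [e1, map_smul, map_smul]
          have p1 := pu (subset_closure hu)
          simp only at p1
          show c • (Ψ.symm ⟨u, _⟩ : Disc Γ →ᵇ ℂ) = c • (resEquiv Γ ⟨u, _⟩ : Disc Γ →ᵇ ℂ)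
          rw [p1]
        | star u hu pu =>
          intro hgC
          have e1 : (⟨star u, hgC⟩ : CIci Γ) = star ⟨u, subset_closure hu⟩ := rfl
          show (Ψ.symm ⟨star u, hgC⟩ : Disc Γ →ᵇ ℂ) = (resEquiv Γ ⟨star u, hgC⟩ : Disc Γ →ᵇ ℂ)
          rw [e1, map_star, map_star]
          have p1 := pu (subset_closure hu)
          simp only at p1
          show star (Ψ.symm ⟨u, _⟩ : Disc Γ →ᵇ ℂ) = star (resEquiv Γ ⟨u, _⟩ : Disc Γ →ᵇ ℂ)
          rw [p1]
      have := Continuous.ext_on hdense hcont1 hcont2 heq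
      intro x
      exact congrFun this x
    have key2 : ∀ x : CIci Γ, Ψ.symm x = resEquiv Γ x := fun x => Subtype.ext (key x)
    refine StarAlgEquiv.ext fun y => ?_
    have h1 : Ψ.symm (Ψ y) = resEquiv Γ (Ψ y) := key2 (Ψ y)
    rw [StarAlgEquiv.symm_apply_apply] at h1
    have h2 := congrArg (resEquiv Γ).symm h1
    rw [StarAlgEquiv.symm_apply_apply] at h2
    exact h2.symm

end
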